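/- Let (X, μ) be a measure space, δ a positive integer, and let u, v : X → ℝ be measurable functions in L^{δ+1}(μ) ∩ L^{2(δ+1)}(μ), and let g : X → ℝ be measurable and essentially bounded. Then | ∫ (u^{2δ+1} − v^{2δ+1})·g dμ | ≤ (2δ+1)·2^{2δ−1}·‖u − v‖_{L^{δ+1}(μ)} · ( ‖u‖_{L^{2(δ+1)}(μ)}^{2δ} + ‖v‖_{L^{2(δ+1)}(μ)}^{2δ} ) · ‖g‖_{L^∞(μ)}. -/

import Mathlib

open MeasureTheory

/-- The L^p(μ) norm ‖f‖_{L^p(μ)} = (∫ |f|^p dμ)^{1/p}. -/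
noncomputable def lpNormR {X : Type*} [MeasurableSpace X] (μ : Measure X) (p : ℕ)
    (f : X → ℝ) : ℝ :=
  (∫ x, |f x| ^ p ∂μ) ^ ((1 : ℝ) / p)

section Aux

open Finset ENNReal

/-- Pointwise: `|a^(n+1) - b^(n+1)| ≤ (n+1) * |a-b| * (|a|^n + |b|^n)`. -/
lemma abs_pow_sub_pow_le' (a b : ℝ) (n : ℕ) :
    |a ^ (n + 1) - b ^ (n + 1)| ≤ (n + 1 : ℝ) * |a - b| * (|a| ^ n + |b| ^ n) := by
  rw [← geom_sum₂_mul a b (n + 1), abs_mul]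
  have hsum : |∑ i ∈ range (n + 1), a ^ i * b ^ (n + 1 - 1 - i)| ≤
      (n + 1 : ℝ) * (|a| ^ n + |b| ^ n) := by
    calc |∑ i ∈ range (n + 1), a ^ i * b ^ (n + 1 - 1 - i)|
        ≤ ∑ i ∈ range (n + 1), |a ^ i * b ^ (n + 1 - 1 - i)| :=
          Finset.abs_sum_le_sum_abs _ _
      _ ≤ ∑ _i ∈ range (n + 1), (|a| ^ n + |b| ^ n) := by
          refine Finset.sum_le_sum fun i hi => ?_
          rw [Finset.mem_range] at hi
          rw [abs_mul, abs_pow, abs_pow]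
          rcases le_total |a| |b| with h | h
          · have h1 : |a| ^ i * |b| ^ (n + 1 - 1 - i) ≤ |b| ^ i * |b| ^ (n + 1 - 1 - i) := by
              gcongr
            refine h1.trans ?_
            rw [← pow_add]
            have hin : i + (n + 1 - 1 - i) = n := by omega
            rw [hin]
            exact le_add_of_nonneg_left (pow_nonneg (abs_nonneg _) _)
          · have h1 : |a| ^ i * |b| ^ (n + 1 - 1 - i) ≤ |a| ^ i * |a| ^ (n + 1 - 1 - i) := by
              gcongr
            refine h1.trans ?_
            rw [← pow_add]
            have hin : i + (n + 1 - 1 - i) = n := by omega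
            rw [hin]
            exact le_add_of_nonneg_right (pow_nonneg (abs_nonneg _) _)
      _ = (n + 1 : ℝ) * (|a| ^ n + |b| ^ n) := by
          rw [Finset.sum_const, Finset.card_range, nsmul_eq_mul]
          push_cast; ring
  calc |∑ i ∈ range (n + 1), a ^ i * b ^ (n + 1 - 1 - i)| * |a - b|
      ≤ ((n + 1 : ℝ) * (|a| ^ n + |b| ^ n)) * |a - b| :=
        mul_le_mul_of_nonneg_right hsum (abs_nonneg _)
    _ = (n + 1 : ℝ) * |a - b| * (|a| ^ n + |b| ^ n) := by ring

/-- Young-type pointwise bound: `a * c^(2δ) ≤ a^(δ+1) + c^(2(δ+1))` for nonneg `a, c`. -/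
lemma young_aux (δ : ℕ) (a c : ℝ) (ha : 0 ≤ a) (hc : 0 ≤ c) :
    a * c ^ (2 * δ) ≤ a ^ (δ + 1) + c ^ (2 * (δ + 1)) := by
  rcases le_total a (c ^ 2) with h | h
  · have h1 : a * c ^ (2 * δ) ≤ c ^ 2 * c ^ (2 * δ) :=
      mul_le_mul_of_nonneg_right h (by positivity)
    refine h1.trans ?_
    rw [← pow_add]
    have h2 : 2 + 2 * δ = 2 * (δ + 1) := by ring
    rw [h2]
    exact le_add_of_nonneg_left (pow_nonneg ha _)
  · have hcd : c ^ (2 * δ) ≤ a ^ δ := by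
      rw [pow_mul]
      exact pow_le_pow_left₀ (by positivity) h δ
    have h1 : a * c ^ (2 * δ) ≤ a * a ^ δ := mul_le_mul_of_nonneg_left hcd ha
    refine h1.trans ?_
    rw [← pow_succ']
    exact le_add_of_nonneg_right (pow_nonneg hc _)

variable {X : Type*} [MeasurableSpace X] {μ : Measure X}

/-- `Memℒp` from integrability of the `n`-th power of the absolute value. -/
lemma memℒp_of_integrable_abs_pow {f : X → ℝ} (hf : Measurable f) {n : ℕ} (hn : n ≠ 0)
    (h : Integrable (fun x => |f x| ^ n) μ) : MemLp f (n : ℝ≥0∞) μ := by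
  refine (memLp_norm_rpow_iff (q := (n : ℝ≥0∞)) hf.aestronglyMeasurable
    (by exact_mod_cast hn) (by simp)).mp ?_
  rw [ENNReal.div_self (by exact_mod_cast hn) (by simp), memLp_one_iff_integrable]
  have heq : (fun x => ‖f x‖ ^ ((n : ℝ≥0∞)).toReal) = fun x => |f x| ^ n := by
    funext x
    rw [ENNReal.toReal_natCast, Real.rpow_natCast, Real.norm_eq_abs]
  rw [heq]
  exact h

/-- Integrability of the `n`-th power of the absolute value from `Memℒp`. -/
lemma integrable_abs_pow_of_memℒp {f : X → ℝ} {n : ℕ} (hn : n ≠ 0)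
    (h : MemLp f (n : ℝ≥0∞) μ) : Integrable (fun x => |f x| ^ n) μ := by
  have h1 := h.norm_rpow (by exact_mod_cast hn) (by simp)
  rw [memLp_one_iff_integrable] at h1
  have heq : (fun x => ‖f x‖ ^ ((n : ℝ≥0∞)).toReal) = fun x => |f x| ^ n := by
    funext x
    rw [ENNReal.toReal_natCast, Real.rpow_natCast, Real.norm_eq_abs]
  rwa [heq] at h1

lemma lpNormR_nonneg (μ : Measure X) (p : ℕ) (f : X → ℝ) : 0 ≤ lpNormR μ p f :=
  Real.rpow_nonneg (integral_nonneg fun x => pow_nonneg (abs_nonneg _) _) _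

/-- Hölder's inequality with exponents `δ+1` and `(δ+1)/δ`. -/
lemma hoelder_aux (μ : Measure X) (δ : ℕ) (hδ : 0 < δ) (w z : X → ℝ)
    (hw : Measurable w) (hz : Measurable z)
    (hw1 : Integrable (fun x => |w x| ^ (δ + 1)) μ)
    (hzp : Integrable (fun x => |z x| ^ (2 * (δ + 1))) μ) :
    ∫ x, |w x| * |z x| ^ (2 * δ) ∂μ ≤
      lpNormR μ (δ + 1) w * lpNormR μ (2 * (δ + 1)) z ^ (2 * δ) := by
  have hδR : (0:ℝ) < δ := by exact_mod_cast hδ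
  set pR : ℝ := (δ : ℝ) + 1 with hpR
  set qR : ℝ := ((δ : ℝ) + 1) / δ with hqR
  have hpq : Real.HolderConjugate pR qR := by
    refine (Real.holderConjugate_iff_eq_conjExponent (by rw [hpR]; linarith)).mpr ?_
    rw [hpR, hqR]
    ring
  -- MemLp for |w| at exponent p
  have hwp : MemLp (fun x => |w x|) (ENNReal.ofReal pR) μ := by
    have h1 : MemLp w (((δ + 1 : ℕ)) : ℝ≥0∞) μ :=
      memℒp_of_integrable_abs_pow hw (by omega) hw1
    have h2 := h1.norm
    have hfun : (fun x => ‖w x‖) = fun x => |w x| := by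
      funext x; exact Real.norm_eq_abs _
    rw [hfun] at h2
    have hexp : ENNReal.ofReal pR = ((δ + 1 : ℕ) : ℝ≥0∞) := by
      rw [hpR, show ((δ : ℝ) + 1) = ((δ + 1 : ℕ) : ℝ) by push_cast; ring,
        ENNReal.ofReal_natCast]
    rwa [hexp]
  -- MemLp for |z|^(2δ) at exponent q
  have hzq : MemLp (fun x => |z x| ^ (2 * δ)) (ENNReal.ofReal qR) μ := by
    have h1 : MemLp z (((2 * (δ + 1) : ℕ)) : ℝ≥0∞) μ :=
      memℒp_of_integrable_abs_pow hz (by omega) hzp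
    have h2 := (memLp_norm_rpow_iff (q := ((2 * δ : ℕ) : ℝ≥0∞))
      (p := ((2 * (δ + 1) : ℕ) : ℝ≥0∞)) hz.aestronglyMeasurable
      (by exact_mod_cast (by omega : (2 * δ : ℕ) ≠ 0)) (ENNReal.natCast_ne_top _)).mpr h1
    have hfun : (fun x => ‖z x‖ ^ (((2 * δ : ℕ) : ℝ≥0∞)).toReal) =
        fun x => |z x| ^ (2 * δ) := by
      funext x
      rw [ENNReal.toReal_natCast, Real.rpow_natCast, Real.norm_eq_abs]
    rw [hfun] at h2
    have hexp : (((2 * (δ + 1) : ℕ) : ℝ≥0∞)) / (((2 * δ : ℕ) : ℝ≥0∞)) =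
        ENNReal.ofReal qR := by
      rw [hqR, ENNReal.ofReal_div_of_pos hδR,
        show ((δ : ℝ) + 1) = ((δ + 1 : ℕ) : ℝ) by push_cast; ring,
        ENNReal.ofReal_natCast, ENNReal.ofReal_natCast]
      push_cast
      rw [ENNReal.mul_div_mul_left _ _ (by norm_num) (by norm_num)]
    rwa [hexp] at h2
  have hH := integral_mul_le_Lp_mul_Lq_of_nonneg hpq
    (Filter.Eventually.of_forall fun x => abs_nonneg (w x))
    (Filter.Eventually.of_forall fun x => pow_nonneg (abs_nonneg (z x)) _)
    hwp hzq
  refine hH.trans (le_of_eq ?_)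
  have hA : (0:ℝ) ≤ ∫ x, |w x| ^ (δ + 1) ∂μ :=
    integral_nonneg fun x => pow_nonneg (abs_nonneg _) _
  have hB : (0:ℝ) ≤ ∫ x, |z x| ^ (2 * (δ + 1)) ∂μ :=
    integral_nonneg fun x => pow_nonneg (abs_nonneg _) _
  have hint1 : (∫ a, |w a| ^ pR ∂μ) = ∫ x, |w x| ^ (δ + 1) ∂μ := by
    have hfun : (fun a => |w a| ^ pR) = fun x => (|w x| ^ (δ + 1) : ℝ) := by
      funext x
      rw [hpR, show ((δ : ℝ) + 1) = ((δ + 1 : ℕ) : ℝ) by push_cast; ring,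
        Real.rpow_natCast]
    rw [hfun]
  have hint2 : (∫ a, (|z a| ^ (2 * δ)) ^ qR ∂μ) = ∫ x, |z x| ^ (2 * (δ + 1)) ∂μ := by
    have hfun : (fun a => (|z a| ^ (2 * δ)) ^ qR) = fun x => (|z x| ^ (2 * (δ + 1)) : ℝ) := by
      funext x
      rw [← Real.rpow_natCast (|z x|) (2 * δ), ← Real.rpow_mul (abs_nonneg _),
        show ((2 * δ : ℕ) : ℝ) * qR = ((2 * (δ + 1) : ℕ) : ℝ) by
          rw [hqR]; push_cast; field_simp,
        Real.rpow_natCast]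
    rw [hfun]
  rw [hint1, hint2]
  unfold lpNormR
  congr 1
  · congr 1
    rw [hpR]; push_cast; ring
  · rw [← Real.rpow_natCast ((∫ x, |z x| ^ (2 * (δ + 1)) ∂μ) ^ ((1:ℝ) / (2 * (δ + 1) : ℕ))) (2 * δ),
      ← Real.rpow_mul hB]
    congr 1
    rw [hqR]; push_cast; field_simp

end Aux

theorem stmt_13 {X : Type*} [MeasurableSpace X] (μ : Measure X)
    (δ : ℕ) (hδ : 0 < δ) (u v g : X → ℝ)
    (hu : Measurable u) (hv : Measurable v) (hg : Measurable g)
    (hu1 : Integrable (fun x => |u x| ^ (δ + 1)) μ)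
    (hv1 : Integrable (fun x => |v x| ^ (δ + 1)) μ)
    (hup : Integrable (fun x => |u x| ^ (2 * (δ + 1))) μ)
    (hvp : Integrable (fun x => |v x| ^ (2 * (δ + 1))) μ)
    (hgb : eLpNorm g ⊤ μ < ⊤) :
    |∫ x, (u x ^ (2 * δ + 1) - v x ^ (2 * δ + 1)) * g x ∂μ| ≤
      (2 * (δ : ℝ) + 1) * 2 ^ (2 * δ - 1) * lpNormR μ (δ + 1) (fun x => u x - v x) *
        (lpNormR μ (2 * (δ + 1)) u ^ (2 * δ) + lpNormR μ (2 * (δ + 1)) v ^ (2 * δ)) *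
        (eLpNorm g ⊤ μ).toReal := by
  classical
  set M : ℝ := (eLpNorm g ⊤ μ).toReal with hM
  have hM0 : 0 ≤ M := ENNReal.toReal_nonneg
  -- a.e. bound on g
  have hg_ae : ∀ᵐ x ∂μ, |g x| ≤ M := by
    have h1 : ∀ᵐ x ∂μ, (‖g x‖₊ : ENNReal) ≤ eLpNormEssSup g μ := ae_le_eLpNormEssSup
    rw [eLpNorm_exponent_top] at hgb
    filter_upwards [h1] with x hx
    have h2 := ENNReal.toReal_mono hgb.ne hx
    rwa [ENNReal.coe_toReal, coe_nnnorm, Real.norm_eq_abs, ← eLpNorm_exponent_top, ← hM] at h2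
  -- integrability of u - v powers
  have hwv1 : Integrable (fun x => |u x - v x| ^ (δ + 1)) μ := by
    have h1 : MemLp u (((δ + 1 : ℕ)) : ENNReal) μ :=
      memℒp_of_integrable_abs_pow hu (by omega) hu1
    have h2 : MemLp v (((δ + 1 : ℕ)) : ENNReal) μ :=
      memℒp_of_integrable_abs_pow hv (by omega) hv1
    exact integrable_abs_pow_of_memℒp (by omega) (h1.sub h2)
  -- integrability of products
  have hIu : Integrable (fun x => |u x - v x| * |u x| ^ (2 * δ)) μ := by
    refine Integrable.mono' (hwv1.add hup)
      (((hu.sub hv).abs.mul ((hu.abs).pow_const _)).aestronglyMeasurable)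
      (Filter.Eventually.of_forall fun x => ?_)
    rw [Real.norm_eq_abs, abs_of_nonneg (mul_nonneg (abs_nonneg _) (pow_nonneg (abs_nonneg _) _))]
    exact young_aux δ _ _ (abs_nonneg _) (abs_nonneg _)
  have hIv : Integrable (fun x => |u x - v x| * |v x| ^ (2 * δ)) μ := by
    refine Integrable.mono' (hwv1.add hvp)
      (((hu.sub hv).abs.mul ((hv.abs).pow_const _)).aestronglyMeasurable)
      (Filter.Eventually.of_forall fun x => ?_)
    rw [Real.norm_eq_abs, abs_of_nonneg (mul_nonneg (abs_nonneg _) (pow_nonneg (abs_nonneg _) _))]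
    exact young_aux δ _ _ (abs_nonneg _) (abs_nonneg _)
  set c : ℝ := (2 * (δ : ℝ) + 1) * M with hc
  have hc0 : 0 ≤ c := by positivity
  -- step 1: triangle + pointwise bound
  have step1 : |∫ x, (u x ^ (2 * δ + 1) - v x ^ (2 * δ + 1)) * g x ∂μ| ≤
      ∫ x, c * (|u x - v x| * |u x| ^ (2 * δ) + |u x - v x| * |v x| ^ (2 * δ)) ∂μ := by
    have habs : |∫ x, (u x ^ (2 * δ + 1) - v x ^ (2 * δ + 1)) * g x ∂μ| ≤
        ∫ x, |u x ^ (2 * δ + 1) - v x ^ (2 * δ + 1)| * |g x| ∂μ := by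
      simpa [Real.norm_eq_abs] using norm_integral_le_integral_norm
        (μ := μ) (f := fun x => (u x ^ (2 * δ + 1) - v x ^ (2 * δ + 1)) * g x)
    refine habs.trans ?_
    refine integral_mono_of_nonneg
      (Filter.Eventually.of_forall fun x => mul_nonneg (abs_nonneg _) (abs_nonneg _))
      (((hIu.add hIv).const_mul c)) ?_
    filter_upwards [hg_ae] with x hgx
    have hkey := abs_pow_sub_pow_le' (u x) (v x) (2 * δ)
    calc |u x ^ (2 * δ + 1) - v x ^ (2 * δ + 1)| * |g x|
        ≤ ((2 * δ + 1 : ℝ) * |u x - v x| * (|u x| ^ (2 * δ) + |v x| ^ (2 * δ))) * M := by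
          apply mul_le_mul (by exact_mod_cast hkey) hgx (abs_nonneg _)
          positivity
      _ = c * (|u x - v x| * |u x| ^ (2 * δ) + |u x - v x| * |v x| ^ (2 * δ)) := by
          rw [hc]; push_cast; ring
  refine step1.trans ?_
  rw [integral_const_mul, integral_add hIu hIv]
  have hHu := hoelder_aux μ δ hδ (fun x => u x - v x) u (hu.sub hv) hu hwv1 hup
  have hHv := hoelder_aux μ δ hδ (fun x => u x - v x) v (hu.sub hv) hv hwv1 hvp
  set L : ℝ := lpNormR μ (δ + 1) (fun x => u x - v x) with hL
  set Nu : ℝ := lpNormR μ (2 * (δ + 1)) u with hNu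
  set Nv : ℝ := lpNormR μ (2 * (δ + 1)) v with hNv
  have hL0 : 0 ≤ L := lpNormR_nonneg _ _ _
  have hNu0 : 0 ≤ Nu := lpNormR_nonneg _ _ _
  have hNv0 : 0 ≤ Nv := lpNormR_nonneg _ _ _
  have step2 : c * ((∫ x, |u x - v x| * |u x| ^ (2 * δ) ∂μ) +
      ∫ x, |u x - v x| * |v x| ^ (2 * δ) ∂μ) ≤ c * (L * Nu ^ (2 * δ) + L * Nv ^ (2 * δ)) := by
    apply mul_le_mul_of_nonneg_left _ hc0
    exact add_le_add hHu hHv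
  refine step2.trans ?_
  have h2pow : (1 : ℝ) ≤ 2 ^ (2 * δ - 1) := one_le_pow₀ (by norm_num)
  calc c * (L * Nu ^ (2 * δ) + L * Nv ^ (2 * δ))
      = (2 * (δ : ℝ) + 1) * 1 * L * (Nu ^ (2 * δ) + Nv ^ (2 * δ)) * M := by
        rw [hc]; ring
    _ ≤ (2 * (δ : ℝ) + 1) * 2 ^ (2 * δ - 1) * L * (Nu ^ (2 * δ) + Nv ^ (2 * δ)) * M := by
        have hterm : (0:ℝ) ≤ Nu ^ (2 * δ) + Nv ^ (2 * δ) := by positivity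
        have hbase : (0:ℝ) ≤ 2 * (δ : ℝ) + 1 := by positivity
        apply mul_le_mul_of_nonneg_right _ hM0
        apply mul_le_mul_of_nonneg_right _ hterm
        apply mul_le_mul_of_nonneg_right _ hL0
        exact mul_le_mul_of_nonneg_left h2pow hbase
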